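/- arXiv:1601.04120 — 7 statements merged into one kernel-verified Lean document; each statement's English description precedes it below -/
import Mathlib

section
/- Let Δx > 0 and let u : ℝ → ℝ be a polynomial function of degree at most 3. For y ∈ ℝ define the P¹ projection coefficients on the cell [y − Δx/2, y + Δx/2]: a₀(y) = (1/Δx)∫_{y−Δx/2}^{y+Δx/2} u(x) dx and a₁(y) = (12/Δx)∫_{y−Δx/2}^{y+Δx/2} u(x)·(x−y)/Δx dx, and set g(y) = a₀(y) + a₁(y)/2 (the upwind interface value at y + Δx/2). Then for every y ∈ ℝ: (g(y) − g(y − Δx))/Δx = u'(y) − u'''(y)·Δx²/24. -/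
open Real

lemma hasDerivAt_quintic (d0 d1 d2 d3 d4 x : ℝ) :
    HasDerivAt (fun x : ℝ => d0*x + d1/2*x^2 + d2/3*x^3 + d3/4*x^4 + d4/5*x^5)
      (d0 + d1*x + d2*x^2 + d3*x^3 + d4*x^4) x := by
  have h := (((((hasDerivAt_id x).const_mul d0).add
      ((hasDerivAt_pow 2 x).const_mul (d1/2))).add
      ((hasDerivAt_pow 3 x).const_mul (d2/3))).add
      ((hasDerivAt_pow 4 x).const_mul (d3/4))).add
      ((hasDerivAt_pow 5 x).const_mul (d4/5))
  refine (h.congr_deriv ?_).congr_of_eventuallyEq (Filter.Eventually.of_forall fun y => ?_)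
  push_cast; ring
  simp

lemma int_poly4 (a b d0 d1 d2 d3 d4 : ℝ) :
    (∫ x in a..b, (d0 + d1*x + d2*x^2 + d3*x^3 + d4*x^4)) =
      (d0*b + d1/2*b^2 + d2/3*b^3 + d3/4*b^4 + d4/5*b^5)
      - (d0*a + d1/2*a^2 + d2/3*a^3 + d3/4*a^4 + d4/5*a^5) := by
  exact intervalIntegral.integral_eq_sub_of_hasDerivAt
    (fun x _ => hasDerivAt_quintic d0 d1 d2 d3 d4 x)
    (by apply Continuous.intervalIntegrable; continuity)

lemma hasDerivAt_cubic (c0 c1 c2 c3 x : ℝ) :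
    HasDerivAt (fun x : ℝ => c0 + c1*x + c2*x^2 + c3*x^3)
      (c1 + 2*c2*x + 3*c3*x^2) x := by
  have h := (((hasDerivAt_const x c0).add ((hasDerivAt_id x).const_mul c1)).add
      ((hasDerivAt_pow 2 x).const_mul c2)).add ((hasDerivAt_pow 3 x).const_mul c3)
  refine (h.congr_deriv ?_).congr_of_eventuallyEq (Filter.Eventually.of_forall fun y => ?_)
  push_cast; ring
  simp

lemma hasDerivAt_quad (c1 c2 c3 x : ℝ) :
    HasDerivAt (fun x : ℝ => c1 + 2*c2*x + 3*c3*x^2) (2*c2 + 6*c3*x) x := by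
  have h := ((hasDerivAt_const x c1).add ((hasDerivAt_id x).const_mul (2*c2))).add
      ((hasDerivAt_pow 2 x).const_mul (3*c3))
  refine (h.congr_deriv ?_).congr_of_eventuallyEq (Filter.Eventually.of_forall fun y => ?_)
  push_cast; ring
  simp

lemma hasDerivAt_lin (c2 c3 x : ℝ) :
    HasDerivAt (fun x : ℝ => 2*c2 + 6*c3*x) (6*c3) x := by
  have h := (hasDerivAt_const x (2*c2)).add ((hasDerivAt_id x).const_mul (6*c3))
  refine (h.congr_deriv ?_).congr_of_eventuallyEq (Filter.Eventually.of_forall fun y => ?_)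
  ring
  simp

set_option maxHeartbeats 2000000 in
/-- Truncation identity for the upwind flux difference of the second-order DG scheme:
`(g(y) − g(y−Δx))/Δx = u'(y) − u'''(y)·Δx²/24` for cubic `u`. -/
theorem dg_p1_upwind_flux_difference (Δx : ℝ) (hΔx : 0 < Δx)
    (u : ℝ → ℝ) (p : Polynomial ℝ) (hp : p.natDegree ≤ 3)
    (hu : ∀ x, u x = p.eval x)
    (a₀ a₁ g : ℝ → ℝ)
    (ha₀ : ∀ y, a₀ y = (1 / Δx) * ∫ x in (y - Δx / 2)..(y + Δx / 2), u x)
    (ha₁ : ∀ y, a₁ y =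
      (12 / Δx) * ∫ x in (y - Δx / 2)..(y + Δx / 2), u x * ((x - y) / Δx))
    (hg : ∀ y, g y = a₀ y + a₁ y / 2) :
    ∀ y : ℝ, (g y - g (y - Δx)) / Δx
      = deriv u y - iteratedDeriv 3 u y * Δx ^ 2 / 24 := by
  intro y
  have hΔx' : Δx ≠ 0 := ne_of_gt hΔx
  set c0 := p.coeff 0 with hc0
  set c1 := p.coeff 1 with hc1
  set c2 := p.coeff 2 with hc2
  set c3 := p.coeff 3 with hc3
  have hu4 : ∀ x, u x = c0 + c1*x + c2*x^2 + c3*x^3 := by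
    intro x
    rw [hu, Polynomial.eval_eq_sum_range' (lt_of_le_of_lt hp (by norm_num : (3:ℕ) < 4))]
    simp only [Finset.sum_range_succ, Finset.sum_range_zero]
    ring
  have hU : u = fun x => c0 + c1*x + c2*x^2 + c3*x^3 := funext hu4
  -- derivatives
  have hd1 : deriv u = fun x => c1 + 2*c2*x + 3*c3*x^2 := by
    funext x; rw [hU]; exact (hasDerivAt_cubic c0 c1 c2 c3 x).deriv
  have hd2 : deriv (deriv u) = fun x => 2*c2 + 6*c3*x := by
    rw [hd1]; funext x; exact (hasDerivAt_quad c1 c2 c3 x).deriv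
  have hd3 : iteratedDeriv 3 u y = 6*c3 := by
    have : iteratedDeriv 3 u = deriv (deriv (deriv u)) := by
      rw [show (3:ℕ) = 2 + 1 from rfl, iteratedDeriv_succ,
        show (2:ℕ) = 1 + 1 from rfl, iteratedDeriv_succ, iteratedDeriv_one]
    rw [this, hd2]
    have := (hasDerivAt_lin c2 c3 y).deriv
    simp [this]
  have hderiv : deriv u y = c1 + 2*c2*y + 3*c3*y^2 := by rw [hd1]
  -- integrals
  have hI1 : ∀ z : ℝ, (∫ x in (z - Δx/2)..(z + Δx/2), u x) =
      (c0*(z + Δx/2) + c1/2*(z + Δx/2)^2 + c2/3*(z + Δx/2)^3 + c3/4*(z + Δx/2)^4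
        + 0/5*(z + Δx/2)^5)
      - (c0*(z - Δx/2) + c1/2*(z - Δx/2)^2 + c2/3*(z - Δx/2)^3 + c3/4*(z - Δx/2)^4
        + 0/5*(z - Δx/2)^5) := by
    intro z
    rw [intervalIntegral.integral_congr
      (g := fun x => c0 + c1*x + c2*x^2 + c3*x^3 + 0*x^4)
      (fun x _ => by rw [hu4]; ring), int_poly4]
  have hI2 : ∀ z : ℝ, (∫ x in (z - Δx/2)..(z + Δx/2), u x * ((x - z) / Δx)) =
      ((-c0*z/Δx)*(z + Δx/2) + ((c0 - c1*z)/Δx)/2*(z + Δx/2)^2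
        + ((c1 - c2*z)/Δx)/3*(z + Δx/2)^3 + ((c2 - c3*z)/Δx)/4*(z + Δx/2)^4
        + (c3/Δx)/5*(z + Δx/2)^5)
      - ((-c0*z/Δx)*(z - Δx/2) + ((c0 - c1*z)/Δx)/2*(z - Δx/2)^2
        + ((c1 - c2*z)/Δx)/3*(z - Δx/2)^3 + ((c2 - c3*z)/Δx)/4*(z - Δx/2)^4
        + (c3/Δx)/5*(z - Δx/2)^5) := by
    intro z
    rw [intervalIntegral.integral_congr
      (g := fun x => (-c0*z/Δx) + ((c0 - c1*z)/Δx)*x + ((c1 - c2*z)/Δx)*x^2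
        + ((c2 - c3*z)/Δx)*x^3 + (c3/Δx)*x^4)
      (fun x _ => by rw [hu4]; field_simp; ring), int_poly4]
  rw [hg, hg, ha₀, ha₀, ha₁, ha₁, hI1, hI1, hI2, hI2, hderiv, hd3]
  field_simp
  ring
end

section
/- Let Δx > 0 and let u : ℝ → ℝ be a polynomial function of degree at most 3. For y ∈ ℝ define a₀(y) = (1/Δx)∫_{y−Δx/2}^{y+Δx/2} u(x) dx. Then for every y ∈ ℝ: (6/Δx)·(u(y + Δx/2) − 2a₀(y) + u(y − Δx/2)) = u''(y)·Δx. -/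
open Real

lemma cubic_integral (c0 c1 c2 c3 a b : ℝ) :
    (∫ x in a..b, (c0 + c1*x + c2*x^2 + c3*x^3))
    = c0*(b-a) + c1*(b^2-a^2)/2 + c2*(b^3-a^3)/3 + c3*(b^4-a^4)/4 := by
  have h0 : (∫ x in a..b, (c0 : ℝ)) = c0 * (b - a) := by
    simp [mul_comm]
  have h1 : (∫ x in a..b, c1 * x) = c1 * (b^2 - a^2) / 2 := by
    rw [intervalIntegral.integral_const_mul, integral_id]; ring
  have h2 : (∫ x in a..b, c2 * x^2) = c2 * (b^3 - a^3) / 3 := by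
    rw [intervalIntegral.integral_const_mul, integral_pow]; ring
  have h3 : (∫ x in a..b, c3 * x^3) = c3 * (b^4 - a^4) / 4 := by
    rw [intervalIntegral.integral_const_mul, integral_pow]; ring
  have i0 : IntervalIntegrable (fun _ : ℝ => c0) MeasureTheory.volume a b :=
    intervalIntegrable_const
  have i1 : IntervalIntegrable (fun x : ℝ => c1 * x) MeasureTheory.volume a b := by
    apply Continuous.intervalIntegrable; continuity
  have i2 : IntervalIntegrable (fun x : ℝ => c2 * x^2) MeasureTheory.volume a b := by
    apply Continuous.intervalIntegrable; continuity
  have i3 : IntervalIntegrable (fun x : ℝ => c3 * x^3) MeasureTheory.volume a b := by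
    apply Continuous.intervalIntegrable; continuity
  rw [intervalIntegral.integral_add (by exact (i0.add i1).add i2) i3,
      intervalIntegral.integral_add (i0.add i1) i2,
      intervalIntegral.integral_add i0 i1, h0, h1, h2, h3]

/-- The spatial operator in the slope equation of the second-order DG scheme with
exact interface values equals `u''(y)·Δx` for cubic `u`. -/
theorem dg_p1_slope_operator_exact_flux (Δx : ℝ) (hΔx : 0 < Δx)
    (u : ℝ → ℝ) (p : Polynomial ℝ) (hp : p.natDegree ≤ 3)
    (hu : ∀ x, u x = p.eval x)
    (a₀ : ℝ → ℝ)
    (ha₀ : ∀ y, a₀ y = (1 / Δx) * ∫ x in (y - Δx / 2)..(y + Δx / 2), u x) :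
    ∀ y : ℝ, (6 / Δx) * (u (y + Δx / 2) - 2 * a₀ y + u (y - Δx / 2))
      = iteratedDeriv 2 u y * Δx := by
  intro y
  set c0 := p.coeff 0
  set c1 := p.coeff 1
  set c2 := p.coeff 2
  set c3 := p.coeff 3
  have hu' : u = fun x => c0 + c1*x + c2*x^2 + c3*x^3 := by
    funext x
    rw [hu, Polynomial.eval_eq_sum_range' (lt_of_le_of_lt hp (by norm_num : (3:ℕ) < 4))]
    simp [Finset.sum_range_succ]
    rfl
  have hderiv : iteratedDeriv 2 u y = 2*c2 + 6*c3*y := by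
    rw [hu']
    rw [iteratedDeriv_succ, iteratedDeriv_one]
    have h1 : deriv (fun x => c0 + c1*x + c2*x^2 + c3*x^3)
        = fun x => c1 + 2*c2*x + 3*c3*x^2 := by
      funext x
      have : HasDerivAt (fun x => c0 + c1*x + c2*x^2 + c3*x^3)
          (c1 + 2*c2*x + 3*c3*x^2) x := by
        have := (((hasDerivAt_const x c0).add ((hasDerivAt_id x).const_mul c1)).add
          (((hasDerivAt_pow 2 x)).const_mul c2)).add (((hasDerivAt_pow 3 x)).const_mul c3)
        exact this.congr_deriv (by push_cast; ring)
      exact this.deriv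
    rw [h1]
    have : HasDerivAt (fun x => c1 + 2*c2*x + 3*c3*x^2) (2*c2 + 6*c3*y) y := by
      have := ((hasDerivAt_const y c1).add ((hasDerivAt_id y).const_mul (2*c2))).add
        (((hasDerivAt_pow 2 y)).const_mul (3*c3))
      exact this.congr_deriv (by push_cast; ring)
    exact this.deriv
  rw [hderiv, ha₀, hu']
  simp only
  rw [show (∫ x in (y - Δx / 2)..(y + Δx / 2), (c0 + c1*x + c2*x^2 + c3*x^3)) = _ from
    cubic_integral c0 c1 c2 c3 _ _]
  field_simp
  ring
end

section
/- Let Δx > 0 and let u : ℝ → ℝ be a polynomial function of degree at most 3. For y ∈ ℝ define the P¹ projection coefficients a₀(y) = (1/Δx)∫_{y−Δx/2}^{y+Δx/2} u(x) dx and a₁(y) = (12/Δx)∫_{y−Δx/2}^{y+Δx/2} u(x)·(x−y)/Δx dx, and set g(y) = a₀(y) + a₁(y)/2. Then for every y ∈ ℝ: (6/Δx)·(g(y) + g(y − Δx) − 2a₀(y)) = (2/5)·u'''(y)·Δx². In particular, the term proportional to u''(y)·Δx is absent, so this upwind spatial operator for the slope coefficient does not approximate u''(y)·Δx. -/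
lemma integ_poly4 (c0 c1 c2 c3 c4 a b : ℝ) :
    ∫ x in a..b, (c0 + c1*x + c2*x^2 + c3*x^3 + c4*x^4)
    = c0*(b-a) + c1*(b^2-a^2)/2 + c2*(b^3-a^3)/3 + c3*(b^4-a^4)/4 + c4*(b^5-a^5)/5 := by
  have key : ∀ x ∈ Set.uIcc a b,
      HasDerivAt (fun x : ℝ => c0*x + c1*x^2/2 + c2*x^3/3 + c3*x^4/4 + c4*x^5/5)
        (c0 + c1*x + c2*x^2 + c3*x^3 + c4*x^4) x := by
    intro x _
    have h : HasDerivAt (fun x : ℝ => c0*x + c1*x^2/2 + c2*x^3/3 + c3*x^4/4 + c4*x^5/5)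
        (c0*1 + (c1*(↑2*x^1))/2 + (c2*(↑3*x^2))/3 + (c3*(↑4*x^3))/4 + (c4*(↑5*x^4))/5) x :=
      (((((hasDerivAt_id x).const_mul c0).add
        (((hasDerivAt_pow 2 x).const_mul c1).div_const 2)).add
        (((hasDerivAt_pow 3 x).const_mul c2).div_const 3)).add
        (((hasDerivAt_pow 4 x).const_mul c3).div_const 4)).add
        (((hasDerivAt_pow 5 x).const_mul c4).div_const 5)
    convert h using 1; ring
  have hint : IntervalIntegrable (fun x : ℝ => c0 + c1*x + c2*x^2 + c3*x^3 + c4*x^4)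
      MeasureTheory.volume a b := by
    apply Continuous.intervalIntegrable; continuity
  rw [intervalIntegral.integral_eq_sub_of_hasDerivAt key hint]
  ring

lemma deriv_cubic (c0 c1 c2 c3 : ℝ) :
    deriv (fun x : ℝ => c0 + c1*x + c2*x^2 + c3*x^3)
      = fun x : ℝ => c1 + 2*c2*x + 3*c3*x^2 := by
  funext x
  have h : HasDerivAt (fun x : ℝ => c0 + c1*x + c2*x^2 + c3*x^3)
      (0 + c1*1 + c2*(↑2*x^1) + c3*(↑3*x^2)) x :=
    (((hasDerivAt_const x c0).add ((hasDerivAt_id x).const_mul c1)).add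
      ((hasDerivAt_pow 2 x).const_mul c2)).add ((hasDerivAt_pow 3 x).const_mul c3)
  have := h.deriv
  rw [this]; ring

lemma iteratedDeriv3_cubic (c0 c1 c2 c3 : ℝ) (y : ℝ) :
    iteratedDeriv 3 (fun x : ℝ => c0 + c1*x + c2*x^2 + c3*x^3) y = 6 * c3 := by
  rw [show (3:ℕ) = 2 + 1 from rfl, iteratedDeriv_succ,
      show (2:ℕ) = 1 + 1 from rfl, iteratedDeriv_succ, iteratedDeriv_one]
  rw [deriv_cubic]
  rw [show (fun x : ℝ => c1 + 2*c2*x + 3*c3*x^2)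
      = fun x : ℝ => c1 + (2*c2)*x + (3*c3)*x^2 + 0*x^3 from by funext x; ring]
  rw [deriv_cubic]
  rw [show (fun x : ℝ => 2*c2 + 2*(3*c3)*x + 3*0*x^2)
      = fun x : ℝ => 2*c2 + (6*c3)*x + 0*x^2 + 0*x^3 from by funext x; ring]
  rw [deriv_cubic]
  norm_num

/-- The upwind spatial operator in the slope equation of the second-order DG scheme
equals `(2/5)·u'''(y)·Δx²` for cubic `u`; in particular the `u''(y)·Δx` term is
absent, so the slope update degenerates to first order. -/
theorem dg_p1_slope_operator_upwind_flux (Δx : ℝ) (hΔx : 0 < Δx)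
    (u : ℝ → ℝ) (p : Polynomial ℝ) (hp : p.natDegree ≤ 3)
    (hu : ∀ x, u x = p.eval x)
    (a₀ a₁ g : ℝ → ℝ)
    (ha₀ : ∀ y, a₀ y = (1 / Δx) * ∫ x in (y - Δx / 2)..(y + Δx / 2), u x)
    (ha₁ : ∀ y, a₁ y =
      (12 / Δx) * ∫ x in (y - Δx / 2)..(y + Δx / 2), u x * ((x - y) / Δx))
    (hg : ∀ y, g y = a₀ y + a₁ y / 2) :
    ∀ y : ℝ, (6 / Δx) * (g y + g (y - Δx) - 2 * a₀ y)
      = (2 / 5) * iteratedDeriv 3 u y * Δx ^ 2 := by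
  intro y
  have hΔ : Δx ≠ 0 := ne_of_gt hΔx
  set c0 := p.coeff 0; set c1 := p.coeff 1; set c2 := p.coeff 2; set c3 := p.coeff 3
  have hev : ∀ x : ℝ, u x = c0 + c1*x + c2*x^2 + c3*x^3 := by
    intro x
    rw [hu, Polynomial.eval_eq_sum_range' (lt_of_le_of_lt hp (by norm_num : (3:ℕ) < 4))]
    simp only [Finset.sum_range_succ, Finset.sum_range_zero]
    ring
  have hufun : u = fun x : ℝ => c0 + c1*x + c2*x^2 + c3*x^3 := funext hev
  -- explicit a₀
  have hA0 : ∀ z : ℝ, a₀ z = (1/Δx) * (c0*((z+Δx/2)-(z-Δx/2))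
      + c1*((z+Δx/2)^2-(z-Δx/2)^2)/2 + c2*((z+Δx/2)^3-(z-Δx/2)^3)/3
      + c3*((z+Δx/2)^4-(z-Δx/2)^4)/4 + 0*((z+Δx/2)^5-(z-Δx/2)^5)/5) := by
    intro z
    rw [ha₀]
    congr 1
    rw [show (fun x : ℝ => u x) = fun x : ℝ => c0 + c1*x + c2*x^2 + c3*x^3 + 0*x^4 from by
      funext x; rw [hev]; ring]
    exact integ_poly4 c0 c1 c2 c3 0 _ _
  -- explicit a₁
  have hA1 : ∀ z : ℝ, a₁ z = (12/Δx) * ((-c0*z/Δx)*((z+Δx/2)-(z-Δx/2))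
      + ((c0-c1*z)/Δx)*((z+Δx/2)^2-(z-Δx/2)^2)/2
      + ((c1-c2*z)/Δx)*((z+Δx/2)^3-(z-Δx/2)^3)/3
      + ((c2-c3*z)/Δx)*((z+Δx/2)^4-(z-Δx/2)^4)/4
      + (c3/Δx)*((z+Δx/2)^5-(z-Δx/2)^5)/5) := by
    intro z
    rw [ha₁]
    congr 1
    rw [show (fun x : ℝ => u x * ((x - z)/Δx))
        = fun x : ℝ => (-c0*z/Δx) + ((c0-c1*z)/Δx)*x + ((c1-c2*z)/Δx)*x^2
            + ((c2-c3*z)/Δx)*x^3 + (c3/Δx)*x^4 from by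
      funext x; rw [hev]; field_simp; ring]
    exact integ_poly4 _ _ _ _ _ _ _
  have h3 : iteratedDeriv 3 u y = 6 * c3 := by
    rw [hufun]; exact iteratedDeriv3_cubic c0 c1 c2 c3 y
  rw [hg, hg, hA0 y, hA0 (y - Δx), hA1 y, hA1 (y - Δx), h3]
  field_simp
  ring
end

section
/- Let Δx > 0 and let u : ℝ → ℝ be a polynomial function of degree at most 3. For y ∈ ℝ define the P² orthonormal-basis coefficients on the cell [y − Δx/2, y + Δx/2]: a₀(y) = (1/Δx)∫ u dx, a₁(y) = (1/Δx)∫ u(x)·2√3·ξ(x) dx, a₂(y) = (1/Δx)∫ u(x)·(6√5·ξ(x)² − √5/2) dx, where ξ(x) = (x−y)/Δx, and set F(y) = a₀(y) + √3·a₁(y) + √5·a₂(y) (the right-boundary upwind value). Then for every y ∈ ℝ: (√3/Δx)·(F(y) + F(y − Δx) − 2a₀(y)) = (√3/6)·u''(y)·Δx − (√3/60)·u'''(y)·Δx². -/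
open Real

private lemma int5 (a b c0 c1 c2 c3 c4 c5 : ℝ) :
    (∫ x in a..b, (c0 + c1*x + c2*x^2 + c3*x^3 + c4*x^4 + c5*x^5)) =
    (c0*b + c1/2*b^2 + c2/3*b^3 + c3/4*b^4 + c4/5*b^5 + c5/6*b^6)
    - (c0*a + c1/2*a^2 + c2/3*a^3 + c3/4*a^4 + c4/5*a^5 + c5/6*a^6) := by
  have key : ∀ x ∈ Set.uIcc a b,
      HasDerivAt (fun x : ℝ => c0*x + c1/2*x^2 + c2/3*x^3 + c3/4*x^4 + c4/5*x^5 + c5/6*x^6)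
        (c0 + c1*x + c2*x^2 + c3*x^3 + c4*x^4 + c5*x^5) x := by
    intro x _
    have h := (((((((hasDerivAt_id x).const_mul c0).add
      ((hasDerivAt_pow 2 x).const_mul (c1/2))).add
      ((hasDerivAt_pow 3 x).const_mul (c2/3))).add
      ((hasDerivAt_pow 4 x).const_mul (c3/4))).add
      ((hasDerivAt_pow 5 x).const_mul (c4/5))).add
      ((hasDerivAt_pow 6 x).const_mul (c5/6)))
    refine h.congr_deriv ?_
    push_cast
    ring
  rw [intervalIntegral.integral_eq_sub_of_hasDerivAt key ((by continuity : Continuous fun x : ℝ => c0 + c1*x + c2*x^2 + c3*x^3 + c4*x^4 + c5*x^5).intervalIntegrable a b)]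

set_option maxHeartbeats 2000000 in
/-- The upwind spatial operator in the `a₁` equation of the third-order DG scheme
equals `(√3/6)·u''(y)·Δx − (√3/60)·u'''(y)·Δx²` for cubic `u`. -/
theorem dg_p2_a1_operator_upwind_flux (Δx : ℝ) (hΔx : 0 < Δx)
    (u : ℝ → ℝ) (p : Polynomial ℝ) (hp : p.natDegree ≤ 3)
    (hu : ∀ x, u x = p.eval x)
    (a₀ a₁ a₂ F : ℝ → ℝ)
    (ha₀ : ∀ y, a₀ y = (1 / Δx) * ∫ x in (y - Δx / 2)..(y + Δx / 2), u x)
    (ha₁ : ∀ y, a₁ y = (1 / Δx) * ∫ x in (y - Δx / 2)..(y + Δx / 2),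
      u x * (2 * Real.sqrt 3 * ((x - y) / Δx)))
    (ha₂ : ∀ y, a₂ y = (1 / Δx) * ∫ x in (y - Δx / 2)..(y + Δx / 2),
      u x * (6 * Real.sqrt 5 * ((x - y) / Δx) ^ 2 - Real.sqrt 5 / 2))
    (hF : ∀ y, F y = a₀ y + Real.sqrt 3 * a₁ y + Real.sqrt 5 * a₂ y) :
    ∀ y : ℝ, (Real.sqrt 3 / Δx) * (F y + F (y - Δx) - 2 * a₀ y)
      = (Real.sqrt 3 / 6) * iteratedDeriv 2 u y * Δx
        - (Real.sqrt 3 / 60) * iteratedDeriv 3 u y * Δx ^ 2 := by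
  intro y
  have hΔ : Δx ≠ 0 := ne_of_gt hΔx
  set c0 := p.coeff 0 with hc0
  set c1 := p.coeff 1 with hc1
  set c2 := p.coeff 2 with hc2
  set c3 := p.coeff 3 with hc3
  have hu4 : ∀ x, u x = c0 + c1*x + c2*x^2 + c3*x^3 := by
    intro x
    rw [hu, Polynomial.eval_eq_sum_range' (lt_of_le_of_lt hp (by norm_num : (3:ℕ) < 4))]
    simp [Finset.sum_range_succ]
    rfl
  have h3 : Real.sqrt 3 * Real.sqrt 3 = 3 := Real.mul_self_sqrt (by norm_num)
  have h5 : Real.sqrt 5 * Real.sqrt 5 = 5 := Real.mul_self_sqrt (by norm_num)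
  -- derivatives
  have huf : u = fun x => c0 + c1*x + c2*x^2 + c3*x^3 := funext hu4
  have d1 : deriv u = fun x => c1 + 2*c2*x + 3*c3*x^2 := by
    funext x
    rw [huf]
    have h := (((hasDerivAt_const x c0).add ((hasDerivAt_id x).const_mul c1)).add
      ((hasDerivAt_pow 2 x).const_mul c2)).add ((hasDerivAt_pow 3 x).const_mul c3)
    have h' : HasDerivAt (fun x : ℝ => c0 + c1*x + c2*x^2 + c3*x^3)
        (c1 + 2*c2*x + 3*c3*x^2) x := by
      refine h.congr_deriv ?_
      push_cast; ring
    exact h'.deriv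
  have d2 : deriv (fun x : ℝ => c1 + 2*c2*x + 3*c3*x^2) = fun x => 2*c2 + 6*c3*x := by
    funext x
    have h := ((hasDerivAt_const x c1).add ((hasDerivAt_id x).const_mul (2*c2))).add
      ((hasDerivAt_pow 2 x).const_mul (3*c3))
    have h' : HasDerivAt (fun x : ℝ => c1 + 2*c2*x + 3*c3*x^2) (2*c2 + 6*c3*x) x := by
      refine h.congr_deriv ?_
      push_cast; ring
    exact h'.deriv
  have d3 : deriv (fun x : ℝ => 2*c2 + 6*c3*x) = fun _ => 6*c3 := by
    funext x
    have h := (hasDerivAt_const x (2*c2)).add ((hasDerivAt_id x).const_mul (6*c3))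
    have h' : HasDerivAt (fun x : ℝ => 2*c2 + 6*c3*x) (6*c3) x := by
      refine h.congr_deriv ?_
      ring
    exact h'.deriv
  have hD2 : iteratedDeriv 2 u y = 2*c2 + 6*c3*y := by
    rw [show (2:ℕ) = 1 + 1 from rfl, iteratedDeriv_succ, iteratedDeriv_one, d1, d2]
  have hD3 : iteratedDeriv 3 u y = 6*c3 := by
    rw [show (3:ℕ) = 2 + 1 from rfl, iteratedDeriv_succ,
      show (2:ℕ) = 1 + 1 from rfl, iteratedDeriv_succ, iteratedDeriv_one, d1, d2, d3]
  -- closed forms of the coefficients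
  have hA0 : ∀ z : ℝ, a₀ z = c0 + c1*z + c2*(z^2 + Δx^2/12) + c3*(z^3 + z*Δx^2/4) := by
    intro z
    rw [ha₀]
    have e : (∫ x in (z - Δx/2)..(z + Δx/2), u x)
        = ∫ x in (z - Δx/2)..(z + Δx/2), (c0 + c1*x + c2*x^2 + c3*x^3 + 0*x^4 + 0*x^5) := by
      refine intervalIntegral.integral_congr fun x _ => ?_
      rw [hu4]; ring
    rw [e, int5]
    field_simp
    ring
  have hA1 : ∀ z : ℝ, Real.sqrt 3 * a₁ z
      = (c1 + 2*c2*z + 3*c3*z^2) * Δx / 2 + 6*c3 * Δx^3 / 80 := by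
    intro z
    rw [ha₁, ← mul_assoc, mul_comm (Real.sqrt 3) (1/Δx), mul_assoc,
      ← intervalIntegral.integral_const_mul]
    have e : (∫ x in (z - Δx/2)..(z + Δx/2),
          Real.sqrt 3 * (u x * (2 * Real.sqrt 3 * ((x - z) / Δx))))
        = ∫ x in (z - Δx/2)..(z + Δx/2),
          ((-(6/Δx)*z*c0) + ((6/Δx)*(c0 - z*c1))*x + ((6/Δx)*(c1 - z*c2))*x^2
            + ((6/Δx)*(c2 - z*c3))*x^3 + ((6/Δx)*c3)*x^4 + 0*x^5) := by
      refine intervalIntegral.integral_congr fun x _ => ?_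
      rw [hu4]
      linear_combination (2 * (c0 + c1*x + c2*x^2 + c3*x^3) * ((x - z)/Δx)) * h3
    rw [e, int5]
    field_simp
    ring
  have hA2 : ∀ z : ℝ, Real.sqrt 5 * a₂ z = (2*c2 + 6*c3*z) * Δx^2 / 12 := by
    intro z
    rw [ha₂, ← mul_assoc, mul_comm (Real.sqrt 5) (1/Δx), mul_assoc,
      ← intervalIntegral.integral_const_mul]
    have e : (∫ x in (z - Δx/2)..(z + Δx/2),
          Real.sqrt 5 * (u x * (6 * Real.sqrt 5 * ((x - z) / Δx) ^ 2 - Real.sqrt 5 / 2)))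
        = ∫ x in (z - Δx/2)..(z + Δx/2),
          ((c0*((30/Δx^2)*z^2 - 5/2))
            + (c1*((30/Δx^2)*z^2 - 5/2) + c0*(-(60/Δx^2)*z))*x
            + (c2*((30/Δx^2)*z^2 - 5/2) + c1*(-(60/Δx^2)*z) + c0*(30/Δx^2))*x^2
            + (c3*((30/Δx^2)*z^2 - 5/2) + c2*(-(60/Δx^2)*z) + c1*(30/Δx^2))*x^3
            + (c3*(-(60/Δx^2)*z) + c2*(30/Δx^2))*x^4
            + (c3*(30/Δx^2))*x^5) := by
      refine intervalIntegral.integral_congr fun x _ => ?_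
      rw [hu4]
      linear_combination ((c0 + c1*x + c2*x^2 + c3*x^3)
        * (6*((x - z)/Δx)^2 - 1/2)) * h5
    rw [e, int5]
    field_simp
    ring
  rw [hF y, hF (y - Δx), hA0 y, hA0 (y - Δx), hA1 y, hA1 (y - Δx), hA2 y, hA2 (y - Δx),
    hD2, hD3]
  field_simp
  ring
end

section
/- Let Δx > 0 and let u : ℝ → ℝ be a polynomial function of degree at most 3. For y ∈ ℝ define the P² coefficient a₁(y) = (1/Δx)∫_{y−Δx/2}^{y+Δx/2} u(x)·2√3·(x−y)/Δx dx. Then for every y ∈ ℝ: (√5/Δx)·(u(y + Δx/2) − u(y − Δx/2) − √12·a₁(y)) = (√5/60)·u'''(y)·Δx². -/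
open Real

lemma quartic_integral (A B C D E a b : ℝ) :
    (∫ x in a..b, (A*x^4 + B*x^3 + C*x^2 + D*x + E))
      = A*(b^5-a^5)/5 + B*(b^4-a^4)/4 + C*(b^3-a^3)/3 + D*(b^2-a^2)/2 + E*(b-a) := by
  have h : ∀ x : ℝ, HasDerivAt (fun x : ℝ => A/5*x^5 + B/4*x^4 + C/3*x^3 + D/2*x^2 + E*x^1)
      (A*x^4 + B*x^3 + C*x^2 + D*x + E) x := by
    intro x
    have H := (((((hasDerivAt_pow 5 x).const_mul (A/5)).add
      ((hasDerivAt_pow 4 x).const_mul (B/4))).add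
      ((hasDerivAt_pow 3 x).const_mul (C/3))).add
      ((hasDerivAt_pow 2 x).const_mul (D/2))).add
      ((hasDerivAt_pow 1 x).const_mul E)
    exact H.congr_deriv (by push_cast; ring)
  rw [intervalIntegral.integral_eq_sub_of_hasDerivAt (fun x _ => h x)
    (Continuous.intervalIntegrable (by continuity) a b)]
  ring

/-- The spatial operator in the `a₂` equation of the third-order DG scheme with exact
interface values equals `(√5/60)·u'''(y)·Δx²` for cubic `u`. -/
theorem dg_p2_a2_operator_exact_flux (Δx : ℝ) (hΔx : 0 < Δx)
    (u : ℝ → ℝ) (p : Polynomial ℝ) (hp : p.natDegree ≤ 3)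
    (hu : ∀ x, u x = p.eval x)
    (a₁ : ℝ → ℝ)
    (ha₁ : ∀ y, a₁ y = (1 / Δx) * ∫ x in (y - Δx / 2)..(y + Δx / 2),
      u x * (2 * Real.sqrt 3 * ((x - y) / Δx))) :
    ∀ y : ℝ, (Real.sqrt 5 / Δx) *
        (u (y + Δx / 2) - u (y - Δx / 2) - Real.sqrt 12 * a₁ y)
      = (Real.sqrt 5 / 60) * iteratedDeriv 3 u y * Δx ^ 2 := by
  intro y
  set c0 := p.coeff 0
  set c1 := p.coeff 1
  set c2 := p.coeff 2
  set c3 := p.coeff 3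
  have hne : Δx ≠ 0 := ne_of_gt hΔx
  -- the cubic form of u
  have key : ∀ x : ℝ, u x = c0 + c1*x + c2*x^2 + c3*x^3 := by
    intro x
    rw [hu, Polynomial.eval_eq_sum_range' (lt_of_le_of_lt hp (by norm_num : (3:ℕ) < 4))]
    simp [Finset.sum_range_succ]
    rfl
  -- third derivative
  have hder : iteratedDeriv 3 u y = 6 * c3 := by
    have hue : u = fun x => p.eval x := funext hu
    rw [hue]
    have hd : ∀ q : Polynomial ℝ, deriv (fun x => Polynomial.eval x q)
        = fun x => Polynomial.eval x q.derivative := by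
      intro q; funext x; exact Polynomial.deriv (p := q)
    simp only [iteratedDeriv_succ, iteratedDeriv_zero, hd]
    have hps := p.as_sum_range' 4 (lt_of_le_of_lt hp (by norm_num))
    rw [hps]
    simp [Finset.sum_range_succ, Polynomial.derivative_monomial, Polynomial.coeff_monomial,
      c0, c1, c2, c3]
    ring
  -- rewrite the integrand as an explicit quartic
  have hint : ∀ x : ℝ, u x * (2 * Real.sqrt 3 * ((x - y) / Δx))
      = (2 * Real.sqrt 3 / Δx) * (c3*x^4 + (c2 - y*c3)*x^3 + (c1 - y*c2)*x^2
          + (c0 - y*c1)*x + (-(y*c0))) := by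
    intro x
    rw [key x]
    field_simp
    ring
  have ha : a₁ y = (1 / Δx) * ((2 * Real.sqrt 3 / Δx) *
      (c3*((y + Δx/2)^5-(y - Δx/2)^5)/5 + (c2 - y*c3)*((y + Δx/2)^4-(y - Δx/2)^4)/4
        + (c1 - y*c2)*((y + Δx/2)^3-(y - Δx/2)^3)/3
        + (c0 - y*c1)*((y + Δx/2)^2-(y - Δx/2)^2)/2 + (-(y*c0))*((y + Δx/2)-(y - Δx/2)))) := by
    rw [ha₁ y]
    simp only [hint]
    rw [intervalIntegral.integral_const_mul, quartic_integral]
  have h123 : Real.sqrt 12 * Real.sqrt 3 = 6 := by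
    rw [← Real.sqrt_mul (by norm_num : (12:ℝ) ≥ 0)]
    rw [show (12:ℝ)*3 = 6^2 by norm_num, Real.sqrt_sq (by norm_num : (6:ℝ) ≥ 0)]
  rw [ha, hder, key, key]
  field_simp
  linear_combination (-(c1*Δx^3*9600
    + y*Δx^3*c2*19200 + y^2*Δx^3*c3*28800
    + Δx^5*c3*1440)) * h123
end

section
/- Let Δx > 0 and let u : ℝ → ℝ be a polynomial function of degree at most 3. For y ∈ ℝ define the P² orthonormal-basis coefficients on the cell [y − Δx/2, y + Δx/2]: a₀(y) = (1/Δx)∫ u dx, a₁(y) = (1/Δx)∫ u(x)·2√3·ξ(x) dx, a₂(y) = (1/Δx)∫ u(x)·(6√5·ξ(x)² − √5/2) dx, where ξ(x) = (x−y)/Δx, and set F(y) = a₀(y) + √3·a₁(y) + √5·a₂(y). Then for every y ∈ ℝ: (√5/Δx)·(F(y) − F(y − Δx) − √12·a₁(y)) = (√5/60)·u'''(y)·Δx². In particular, for cubic u this upwind operator coincides exactly with the corresponding operator built from the exact interface values u(y ± Δx/2). -/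
set_option maxHeartbeats 1000000


open Real

lemma int_quintic (a b b0 b1 b2 b3 b4 b5 : ℝ) (f : ℝ → ℝ)
    (hf : ∀ x, f x = b0 + b1*x + b2*x^2 + b3*x^3 + b4*x^4 + b5*x^5) :
    ∫ x in a..b, f x =
      (b0*b + b1*b^2/2 + b2*b^3/3 + b3*b^4/4 + b4*b^5/5 + b5*b^6/6)
      - (b0*a + b1*a^2/2 + b2*a^3/3 + b3*a^4/4 + b4*a^5/5 + b5*a^6/6) := by
  have hfe : f = fun x => b0 + b1*x + b2*x^2 + b3*x^3 + b4*x^4 + b5*x^5 := funext hf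
  have hcont : Continuous f := by rw [hfe]; continuity
  have key : ∀ x ∈ Set.uIcc a b,
      HasDerivAt (fun x => b0*x + b1*x^2/2 + b2*x^3/3 + b3*x^4/4 + b4*x^5/5 + b5*x^6/6)
        (f x) x := by
    intro x _
    have H : HasDerivAt (fun x : ℝ =>
        b0*x + b1*x^2/2 + b2*x^3/3 + b3*x^4/4 + b4*x^5/5 + b5*x^6/6)
        (b0 + b1*x + b2*x^2 + b3*x^3 + b4*x^4 + b5*x^5) x := by
      have h1 : HasDerivAt (fun x : ℝ => x) 1 x := hasDerivAt_id x
      have h2 := hasDerivAt_pow 2 x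
      have h3 := hasDerivAt_pow 3 x
      have h4 := hasDerivAt_pow 4 x
      have h5 := hasDerivAt_pow 5 x
      have h6 := hasDerivAt_pow 6 x
      have := (((((h1.const_mul b0).add ((h2.const_mul b1).div_const 2)).add
        ((h3.const_mul b2).div_const 3)).add ((h4.const_mul b3).div_const 4)).add
        ((h5.const_mul b4).div_const 5)).add ((h6.const_mul b5).div_const 6)
      refine this.congr_deriv ?_
      push_cast
      ring
    rw [hf x]
    exact H
  rw [intervalIntegral.integral_eq_sub_of_hasDerivAt key (hcont.intervalIntegrable a b)]

/-- The upwind spatial operator in the `a₂` equation of the third-order DG scheme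
equals `(√5/60)·u'''(y)·Δx²` for cubic `u`; in particular it coincides exactly with
the corresponding operator built from the exact interface values `u(y ± Δx/2)`. -/
theorem dg_p2_a2_operator_upwind_flux (Δx : ℝ) (hΔx : 0 < Δx)
    (u : ℝ → ℝ) (p : Polynomial ℝ) (hp : p.natDegree ≤ 3)
    (hu : ∀ x, u x = p.eval x)
    (a₀ a₁ a₂ F : ℝ → ℝ)
    (ha₀ : ∀ y, a₀ y = (1 / Δx) * ∫ x in (y - Δx / 2)..(y + Δx / 2), u x)
    (ha₁ : ∀ y, a₁ y = (1 / Δx) * ∫ x in (y - Δx / 2)..(y + Δx / 2),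
      u x * (2 * Real.sqrt 3 * ((x - y) / Δx)))
    (ha₂ : ∀ y, a₂ y = (1 / Δx) * ∫ x in (y - Δx / 2)..(y + Δx / 2),
      u x * (6 * Real.sqrt 5 * ((x - y) / Δx) ^ 2 - Real.sqrt 5 / 2))
    (hF : ∀ y, F y = a₀ y + Real.sqrt 3 * a₁ y + Real.sqrt 5 * a₂ y) :
    ∀ y : ℝ,
      (Real.sqrt 5 / Δx) * (F y - F (y - Δx) - Real.sqrt 12 * a₁ y)
        = (Real.sqrt 5 / 60) * iteratedDeriv 3 u y * Δx ^ 2 ∧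
      (Real.sqrt 5 / Δx) * (F y - F (y - Δx) - Real.sqrt 12 * a₁ y)
        = (Real.sqrt 5 / Δx) *
            (u (y + Δx / 2) - u (y - Δx / 2) - Real.sqrt 12 * a₁ y) := by
  have hne : Δx ≠ 0 := ne_of_gt hΔx
  set c0 := p.coeff 0 with hc0
  set c1 := p.coeff 1 with hc1
  set c2 := p.coeff 2 with hc2
  set c3 := p.coeff 3 with hc3
  have hp4 : p.natDegree < 4 := by omega
  have hval : ∀ x, u x = c0 + c1*x + c2*x^2 + c3*x^3 := by
    intro x
    rw [hu, Polynomial.eval_eq_sum_range' hp4]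
    simp [Finset.sum_range_succ]
    rfl
  -- closed form for a₀
  have ha₀' : ∀ y, a₀ y = c0 + c1*y + c2*y^2 + c3*y^3 + (c2 + 3*c3*y)*Δx^2/12 := by
    intro y
    have hf : ∀ x, u x = c0 + c1*x + c2*x^2 + c3*x^3 + 0*x^4 + 0*x^5 := by
      intro x; rw [hval x]; ring
    rw [ha₀, int_quintic _ _ _ _ _ _ _ _ _ hf]
    field_simp
    ring
  -- closed form for a₁
  have ha₁' : ∀ y, a₁ y
      = Real.sqrt 3 * ((c1 + 2*c2*y + 3*c3*y^2)*Δx/6 + c3*Δx^3/40) := by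
    intro y
    have hf : ∀ x, u x * (2 * Real.sqrt 3 * ((x - y) / Δx))
        = (-(2*Real.sqrt 3/Δx)*(c0*y))
          + ((2*Real.sqrt 3/Δx)*(c0 - c1*y))*x
          + ((2*Real.sqrt 3/Δx)*(c1 - c2*y))*x^2
          + ((2*Real.sqrt 3/Δx)*(c2 - c3*y))*x^3
          + ((2*Real.sqrt 3/Δx)*c3)*x^4 + 0*x^5 := by
      intro x; rw [hval x]; field_simp; ring
    rw [ha₁, int_quintic _ _ _ _ _ _ _ _ _ hf]
    field_simp
    ring
  -- closed form for a₂
  have ha₂' : ∀ y, a₂ y = Real.sqrt 5 * ((c2 + 3*c3*y) * Δx^2/30) := by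
    intro y
    have hf : ∀ x, u x * (6 * Real.sqrt 5 * ((x - y) / Δx) ^ 2 - Real.sqrt 5 / 2)
        = (Real.sqrt 5*(c0*(6*y^2/Δx^2 - 1/2)))
          + (Real.sqrt 5*(c1*(6*y^2/Δx^2 - 1/2) - 12*c0*y/Δx^2))*x
          + (Real.sqrt 5*(c2*(6*y^2/Δx^2 - 1/2) - 12*c1*y/Δx^2 + 6*c0/Δx^2))*x^2
          + (Real.sqrt 5*(c3*(6*y^2/Δx^2 - 1/2) - 12*c2*y/Δx^2 + 6*c1/Δx^2))*x^3
          + (Real.sqrt 5*(-(12*c3*y/Δx^2) + 6*c2/Δx^2))*x^4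
          + (Real.sqrt 5*(6*c3/Δx^2))*x^5 := by
      intro x; rw [hval x]; field_simp; ring
    rw [ha₂, int_quintic _ _ _ _ _ _ _ _ _ hf]
    field_simp
    ring
  have h3 : Real.sqrt 3 * Real.sqrt 3 = 3 := Real.mul_self_sqrt (by norm_num)
  have h5 : Real.sqrt 5 * Real.sqrt 5 = 5 := Real.mul_self_sqrt (by norm_num)
  have h12 : Real.sqrt 12 = 2 * Real.sqrt 3 := by
    rw [show (12:ℝ) = 2^2*3 by norm_num, Real.sqrt_mul (by positivity),
      Real.sqrt_sq (by norm_num : (0:ℝ) ≤ 2)]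
  have hF' : ∀ z, F z = a₀ z + 3*((c1 + 2*c2*z + 3*c3*z^2)*Δx/6 + c3*Δx^3/40)
      + 5*((c2 + 3*c3*z) * Δx^2/30) := by
    intro z
    rw [hF, ha₁', ha₂']
    linear_combination ((c1 + 2*c2*z + 3*c3*z^2)*Δx/6 + c3*Δx^3/40) * h3
      + ((c2 + 3*c3*z) * Δx^2/30) * h5
  intro y
  have hder : ∀ q : Polynomial ℝ, deriv (fun x => q.eval x) = fun x => q.derivative.eval x :=
    fun q => funext fun x => Polynomial.deriv (p := q) (x := x)
  have hueq : u = fun x => p.eval x := funext hu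
  have hiter : iteratedDeriv 3 u y = 6 * c3 := by
    have h3d : iteratedDeriv 3 u y = (p.derivative.derivative.derivative).eval y := by
      simp only [iteratedDeriv_succ, iteratedDeriv_zero, hueq, hder]
    rw [h3d]
    have hnd : (p.derivative.derivative.derivative).natDegree < 1 := by
      have h1 := Polynomial.natDegree_derivative_le p
      have h2 := Polynomial.natDegree_derivative_le p.derivative
      have h3 := Polynomial.natDegree_derivative_le p.derivative.derivative
      omega
    rw [Polynomial.eval_eq_sum_range' hnd]
    simp [Finset.sum_range_succ, Polynomial.coeff_derivative]
    ring
  have h6g : Real.sqrt 12 * a₁ y = 6*((c1 + 2*c2*y + 3*c3*y^2)*Δx/6 + c3*Δx^3/40) := by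
    rw [h12, ha₁' y]
    linear_combination (2*((c1 + 2*c2*y + 3*c3*y^2)*Δx/6 + c3*Δx^3/40)) * h3
  constructor
  · rw [hiter, hF' y, hF' (y-Δx), h6g, ha₀' y, ha₀' (y-Δx)]
    field_simp
    ring
  · rw [hF' y, hF' (y-Δx), h6g, ha₀' y, ha₀' (y-Δx), hval (y+Δx/2), hval (y-Δx/2)]
    field_simp
    ring
end

section
/- Let Δx > 0 and let u : ℝ → ℝ be a polynomial function of degree at most 3. For y ∈ ℝ define the P² orthonormal-basis coefficients on the cell [y − Δx/2, y + Δx/2]: a₀(y) = (1/Δx)∫ u dx, a₁(y) = (1/Δx)∫ u(x)·2√3·ξ(x) dx, a₂(y) = (1/Δx)∫ u(x)·(6√5·ξ(x)² − √5/2) dx, where ξ(x) = (x−y)/Δx, and set F(y) = a₀(y) + √3·a₁(y) + √5·a₂(y). Then for every y ∈ ℝ: (F(y) − F(y − Δx))/Δx = u'(y) + u'''(y)·Δx²/24. -/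
set_option maxHeartbeats 1000000


open Real

lemma quintic_integral (a b C0 C1 C2 C3 C4 C5 : ℝ) (f : ℝ → ℝ)
    (hf : ∀ x, f x = C0 + C1*x + C2*x^2 + C3*x^3 + C4*x^4 + C5*x^5) :
    ∫ x in a..b, f x
      = (C0*b + C1*b^2/2 + C2*b^3/3 + C3*b^4/4 + C4*b^5/5 + C5*b^6/6)
      - (C0*a + C1*a^2/2 + C2*a^3/3 + C3*a^4/4 + C4*a^5/5 + C5*a^6/6) := by
  have hD : ∀ x, HasDerivAt
      (fun x => C0*x^1 + C1/2*x^2 + C2/3*x^3 + C3/4*x^4 + C4/5*x^5 + C5/6*x^6) (f x) x := by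
    intro x
    have h1 := (hasDerivAt_pow 1 x).const_mul C0
    have h2 := (hasDerivAt_pow 2 x).const_mul (C1/2)
    have h3 := (hasDerivAt_pow 3 x).const_mul (C2/3)
    have h4 := (hasDerivAt_pow 4 x).const_mul (C3/4)
    have h5 := (hasDerivAt_pow 5 x).const_mul (C4/5)
    have h6 := (hasDerivAt_pow 6 x).const_mul (C5/6)
    have h := ((((h1.add h2).add h3).add h4).add h5).add h6
    convert h using 1
    · rfl
    · rfl
    · rfl
    rw [hf x]; push_cast; ring
  have hcont : Continuous (fun x : ℝ => C0 + C1*x + C2*x^2 + C3*x^3 + C4*x^4 + C5*x^5) := by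
    fun_prop
  have hint : IntervalIntegrable f MeasureTheory.volume a b := by
    have hfe : f = fun x => C0 + C1*x + C2*x^2 + C3*x^3 + C4*x^4 + C5*x^5 := funext hf
    rw [hfe]; exact hcont.intervalIntegrable a b
  rw [intervalIntegral.integral_eq_sub_of_hasDerivAt (fun x _ => hD x) hint]
  ring

/-- The upwind flux difference driving the cell-average update of the third-order DG
scheme equals `u'(y) + u'''(y)·Δx²/24` for cubic `u`. -/
theorem dg_p2_upwind_flux_difference (Δx : ℝ) (hΔx : 0 < Δx)
    (u : ℝ → ℝ) (p : Polynomial ℝ) (hp : p.natDegree ≤ 3)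
    (hu : ∀ x, u x = p.eval x)
    (a₀ a₁ a₂ F : ℝ → ℝ)
    (ha₀ : ∀ y, a₀ y = (1 / Δx) * ∫ x in (y - Δx / 2)..(y + Δx / 2), u x)
    (ha₁ : ∀ y, a₁ y = (1 / Δx) * ∫ x in (y - Δx / 2)..(y + Δx / 2),
      u x * (2 * Real.sqrt 3 * ((x - y) / Δx)))
    (ha₂ : ∀ y, a₂ y = (1 / Δx) * ∫ x in (y - Δx / 2)..(y + Δx / 2),
      u x * (6 * Real.sqrt 5 * ((x - y) / Δx) ^ 2 - Real.sqrt 5 / 2))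
    (hF : ∀ y, F y = a₀ y + Real.sqrt 3 * a₁ y + Real.sqrt 5 * a₂ y) :
    ∀ y : ℝ, (F y - F (y - Δx)) / Δx
      = deriv u y + iteratedDeriv 3 u y * Δx ^ 2 / 24 := by
  have hne : Δx ≠ 0 := ne_of_gt hΔx
  set c0 := p.coeff 0 with hc0
  set c1 := p.coeff 1 with hc1
  set c2 := p.coeff 2 with hc2
  set c3 := p.coeff 3 with hc3
  have hg : ∀ x, u x = c0 + c1*x + c2*x^2 + c3*x^3 := by
    intro x
    rw [hu x, Polynomial.eval_eq_sum_range' (lt_of_le_of_lt hp (by norm_num : 3 < 4)) x]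
    simp only [Finset.sum_range_succ, Finset.sum_range_zero]
    ring
  have hgu : u = fun x => c0 + c1*x + c2*x^2 + c3*x^3 := funext hg
  -- derivatives
  have d1 : ∀ x : ℝ, HasDerivAt (fun x => c0 + c1*x + c2*x^2 + c3*x^3)
      (c1 + 2*c2*x + 3*c3*x^2) x := by
    intro x
    have h1 := (hasDerivAt_pow 1 x).const_mul c1
    have h2 := (hasDerivAt_pow 2 x).const_mul c2
    have h3 := (hasDerivAt_pow 3 x).const_mul c3
    have h := (((hasDerivAt_const x c0).add h1).add h2).add h3
    convert h using 1
    · rfl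
    · rfl
    · funext t; simp only [Pi.add_apply]; ring
    · push_cast; ring
  have e1 : deriv (fun x => c0 + c1*x + c2*x^2 + c3*x^3)
      = fun x => c1 + 2*c2*x + 3*c3*x^2 := funext fun x => (d1 x).deriv
  have d2 : ∀ x : ℝ, HasDerivAt (fun x => c1 + 2*c2*x + 3*c3*x^2)
      (2*c2 + 6*c3*x) x := by
    intro x
    have h1 := (hasDerivAt_pow 1 x).const_mul (2*c2)
    have h2 := (hasDerivAt_pow 2 x).const_mul (3*c3)
    have h := ((hasDerivAt_const x c1).add h1).add h2
    convert h using 1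
    · rfl
    · rfl
    · funext t; simp only [Pi.add_apply]; ring
    · push_cast; ring
  have e2 : deriv (fun x => c1 + 2*c2*x + 3*c3*x^2)
      = fun x => 2*c2 + 6*c3*x := funext fun x => (d2 x).deriv
  have d3 : ∀ x : ℝ, HasDerivAt (fun x => 2*c2 + 6*c3*x) (6*c3) x := by
    intro x
    have h1 := (hasDerivAt_pow 1 x).const_mul (6*c3)
    have h := (hasDerivAt_const x (2*c2)).add h1
    convert h using 1
    · rfl
    · rfl
    · funext t; simp only [Pi.add_apply]; ring
    · push_cast; ring
  have hderiv : ∀ y : ℝ, deriv u y = c1 + 2*c2*y + 3*c3*y^2 := by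
    intro y; rw [hgu]; exact (d1 y).deriv
  have hit3 : ∀ y : ℝ, iteratedDeriv 3 u y = 6*c3 := by
    intro y
    rw [hgu, iteratedDeriv_succ, iteratedDeriv_succ, iteratedDeriv_one, e1, e2]
    exact (d3 y).deriv
  -- coefficient formulas
  have hA0 : ∀ z : ℝ, a₀ z = c0 + c1*z + c2*z^2 + c3*z^3 + (c2 + 3*c3*z)*Δx^2/12 := by
    intro z
    rw [ha₀ z, quintic_integral (z - Δx/2) (z + Δx/2) c0 c1 c2 c3 0 0 u
      (fun x => by simp only [hg]; ring)]
    field_simp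
    ring
  have hA1 : ∀ z : ℝ, a₁ z
      = Real.sqrt 3 * ((c1 + 2*c2*z + 3*c3*z^2)*Δx/6 + c3*Δx^3/40) := by
    intro z
    rw [ha₁ z, quintic_integral (z - Δx/2) (z + Δx/2)
      (-2*Real.sqrt 3*z*c0/Δx) (2*Real.sqrt 3*(c0 - z*c1)/Δx)
      (2*Real.sqrt 3*(c1 - z*c2)/Δx) (2*Real.sqrt 3*(c2 - z*c3)/Δx)
      (2*Real.sqrt 3*c3/Δx) 0
      (fun x => u x * (2 * Real.sqrt 3 * ((x - z) / Δx)))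
      (fun x => by simp only [hg]; field_simp; ring)]
    field_simp
    ring
  have hA2 : ∀ z : ℝ, a₂ z = Real.sqrt 5 * ((c2 + 3*c3*z)*Δx^2/30) := by
    intro z
    rw [ha₂ z, quintic_integral (z - Δx/2) (z + Δx/2)
      (c0*(6*Real.sqrt 5*z^2/Δx^2 - Real.sqrt 5/2))
      (c1*(6*Real.sqrt 5*z^2/Δx^2 - Real.sqrt 5/2) - c0*(12*Real.sqrt 5*z/Δx^2))
      (c2*(6*Real.sqrt 5*z^2/Δx^2 - Real.sqrt 5/2) - c1*(12*Real.sqrt 5*z/Δx^2)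
        + c0*(6*Real.sqrt 5/Δx^2))
      (c3*(6*Real.sqrt 5*z^2/Δx^2 - Real.sqrt 5/2) - c2*(12*Real.sqrt 5*z/Δx^2)
        + c1*(6*Real.sqrt 5/Δx^2))
      (- c3*(12*Real.sqrt 5*z/Δx^2) + c2*(6*Real.sqrt 5/Δx^2))
      (c3*(6*Real.sqrt 5/Δx^2))
      (fun x => u x * (6 * Real.sqrt 5 * ((x - z) / Δx) ^ 2 - Real.sqrt 5 / 2))
      (fun x => by simp only [hg]; field_simp; ring)]
    field_simp
    ring
  have s3 : Real.sqrt 3 * Real.sqrt 3 = 3 := Real.mul_self_sqrt (by norm_num)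
  have s5 : Real.sqrt 5 * Real.sqrt 5 = 5 := Real.mul_self_sqrt (by norm_num)
  have hFz : ∀ z : ℝ, F z = c0 + c1*z + c2*z^2 + c3*z^3 + (c2 + 3*c3*z)*Δx^2/12
      + 3*((c1 + 2*c2*z + 3*c3*z^2)*Δx/6 + c3*Δx^3/40)
      + 5*((c2 + 3*c3*z)*Δx^2/30) := by
    intro z
    rw [hF z, hA0 z, hA1 z, hA2 z, ← mul_assoc, ← mul_assoc, s3, s5]
  intro y
  rw [hFz y, hFz (y - Δx), hderiv y, hit3 y]
  field_simp
  ring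
end
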